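/- Let U ⊆ ℝ³ be open, x₀ ∈ ℝ³, and let E = (E_ij)_{1≤i,j≤3} be a symmetric matrix field of smooth real-valued functions on U. Define the Frank tensor ∂̄_jω_k := ε_kpq ∂_p E_qj, the Burgers tensor ∂̄_j b_k := E_kj + ε_kpq (x_p − x_{0p}) ∂̄_jω_q, and the incompatibility η_ik := ε_ipm ε_kqn ∂_p∂_q E_mn (repeated indices summed over {1,2,3}, ε the Levi-Civita symbol). Then on U, for all i, k: (a) ε_ilj ∂_l (∂̄_jω_k) = η_ik, and (b) ε_ilj ∂_l (∂̄_j b_k) = ε_kpq (x_p − x_{0p}) η_iq. -/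

import Mathlib

set_option maxHeartbeats 2000000


open MeasureTheory Real

/-- Partial derivative in the `i`-th coordinate direction of a function on `ℝ³`. -/
noncomputable def pd3 (i : Fin 3) (f : EuclideanSpace ℝ (Fin 3) → ℝ) :
    EuclideanSpace ℝ (Fin 3) → ℝ :=
  fun x => fderiv ℝ f x (EuclideanSpace.single i 1)

/-- The Levi-Civita symbol `ε_ijk` on `{0,1,2}`. -/
noncomputable def lc (i j k : Fin 3) : ℝ :=
  (((j : ℕ) : ℝ) - ((i : ℕ) : ℝ)) * (((k : ℕ) : ℝ) - ((j : ℕ) : ℝ))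
    * (((k : ℕ) : ℝ) - ((i : ℕ) : ℝ)) / 2

/-- The Frank tensor `∂̄_j ω_k := ε_kpq ∂_p E_qj`. -/
noncomputable def frank (Em : Fin 3 → Fin 3 → EuclideanSpace ℝ (Fin 3) → ℝ)
    (j k : Fin 3) : EuclideanSpace ℝ (Fin 3) → ℝ :=
  fun y => ∑ p, ∑ q, lc k p q * pd3 p (Em q j) y

/-- The Burgers tensor `∂̄_j b_k := E_kj + ε_kpq (x_p − x₀_p) ∂̄_j ω_q`. -/
noncomputable def burg (x₀ : EuclideanSpace ℝ (Fin 3))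
    (Em : Fin 3 → Fin 3 → EuclideanSpace ℝ (Fin 3) → ℝ)
    (j k : Fin 3) : EuclideanSpace ℝ (Fin 3) → ℝ :=
  fun y => Em k j y + ∑ p, ∑ q, lc k p q * (y p - x₀ p) * frank Em j q y

/-- The incompatibility tensor `η_ik := ε_ipm ε_kqn ∂_p ∂_q E_mn`. -/
noncomputable def eta (Em : Fin 3 → Fin 3 → EuclideanSpace ℝ (Fin 3) → ℝ)
    (i k : Fin 3) : EuclideanSpace ℝ (Fin 3) → ℝ :=
  fun x => ∑ p, ∑ m, ∑ q, ∑ n, lc i p m * lc k q n * pd3 p (pd3 q (Em m n)) x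

lemma contDiffOn_pd3 {f : EuclideanSpace ℝ (Fin 3) → ℝ} {U : Set (EuclideanSpace ℝ (Fin 3))}
    (hU : IsOpen U) (hf : ContDiffOn ℝ (⊤ : ℕ∞) f U) (p : Fin 3) :
    ContDiffOn ℝ (⊤ : ℕ∞) (pd3 p f) U := by
  have h1 : ContDiffOn ℝ (⊤ : ℕ∞) (fderiv ℝ f) U := hf.fderiv_of_isOpen hU (by simp)
  exact h1.clm_apply contDiffOn_const

lemma diffAt_of_cd {f : EuclideanSpace ℝ (Fin 3) → ℝ} {U : Set (EuclideanSpace ℝ (Fin 3))}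
    {x : EuclideanSpace ℝ (Fin 3)} (hU : IsOpen U) (hx : x ∈ U)
    (hf : ContDiffOn ℝ (⊤ : ℕ∞) f U) : DifferentiableAt ℝ f x :=
  (hf.contDiffAt (hU.mem_nhds hx)).differentiableAt (by simp)

section pdlemmas
variable {x : EuclideanSpace ℝ (Fin 3)} {f g : EuclideanSpace ℝ (Fin 3) → ℝ} {l : Fin 3}

lemma pd3_add (hf : DifferentiableAt ℝ f x) (hg : DifferentiableAt ℝ g x) :
    pd3 l (fun y => f y + g y) x = pd3 l f x + pd3 l g x := by
  simp [pd3, fderiv_fun_add hf hg]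

lemma pd3_sum {ι : Type*} (s : Finset ι) (F : ι → EuclideanSpace ℝ (Fin 3) → ℝ)
    (h : ∀ i ∈ s, DifferentiableAt ℝ (F i) x) :
    pd3 l (fun y => ∑ i ∈ s, F i y) x = ∑ i ∈ s, pd3 l (F i) x := by
  simp [pd3, fderiv_fun_sum h]

lemma pd3_const_mul (hf : DifferentiableAt ℝ f x) (c : ℝ) :
    pd3 l (fun y => c * f y) x = c * pd3 l f x := by
  simp [pd3, fderiv_const_mul hf c]

lemma pd3_mul (hf : DifferentiableAt ℝ f x) (hg : DifferentiableAt ℝ g x) :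
    pd3 l (fun y => f y * g y) x = pd3 l f x * g x + f x * pd3 l g x := by
  simp [pd3, fderiv_fun_mul hf hg]; ring

lemma pd3_coord (p : Fin 3) (c : ℝ) :
    pd3 l (fun y => y p - c) x = if p = l then 1 else 0 := by
  have h : (fun y : EuclideanSpace ℝ (Fin 3) => y p - c)
      = fun y => (EuclideanSpace.proj p : EuclideanSpace ℝ (Fin 3) →L[ℝ] ℝ) y - c := rfl
  simp only [pd3]
  rw [h, fderiv_sub_const, ContinuousLinearMap.fderiv]
  simp [EuclideanSpace.single_apply, eq_comm]

lemma diffAt_coord (p : Fin 3) (c : ℝ) :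
    DifferentiableAt ℝ (fun y : EuclideanSpace ℝ (Fin 3) => y p - c) x := by
  have h : (fun y : EuclideanSpace ℝ (Fin 3) => y p - c)
      = fun y => (EuclideanSpace.proj p : EuclideanSpace ℝ (Fin 3) →L[ℝ] ℝ) y - c := rfl
  rw [h]
  exact ((EuclideanSpace.proj p : EuclideanSpace ℝ (Fin 3) →L[ℝ] ℝ).differentiableAt).sub_const c

end pdlemmas

/-- **Theorem 1.7 of the paper:** the curl of the Frank tensor is the incompatibility
tensor, and the curl of the Burgers tensor is the moment of incompatibility about the
reference point `x₀`. -/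
theorem curl_frank_and_burgers (U : Set (EuclideanSpace ℝ (Fin 3))) (hU : IsOpen U)
    (x₀ : EuclideanSpace ℝ (Fin 3))
    (Em : Fin 3 → Fin 3 → EuclideanSpace ℝ (Fin 3) → ℝ)
    (hE : ∀ i j, ContDiffOn ℝ (⊤ : ℕ∞) (Em i j) U)
    (hsym : ∀ i j, Em i j = Em j i) :
    (∀ x ∈ U, ∀ i k,
      (∑ l, ∑ j, lc i l j * pd3 l (frank Em j k) x) = eta Em i k x) ∧
    (∀ x ∈ U, ∀ i k,
      (∑ l, ∑ j, lc i l j * pd3 l (burg x₀ Em j k) x)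
        = ∑ p, ∑ q, lc k p q * (x p - x₀ p) * eta Em i q x) := by
  have hpd_cd : ∀ p m n, ContDiffOn ℝ (⊤ : ℕ∞) (pd3 p (Em m n)) U :=
    fun p m n => contDiffOn_pd3 hU (hE m n) p
  have hdE : ∀ m n, ∀ x ∈ U, DifferentiableAt ℝ (Em m n) x :=
    fun m n x hx => diffAt_of_cd hU hx (hE m n)
  have hdpd : ∀ p m n, ∀ x ∈ U, DifferentiableAt ℝ (pd3 p (Em m n)) x :=
    fun p m n x hx => diffAt_of_cd hU hx (hpd_cd p m n)
  have hfr_cd : ∀ j k, ContDiffOn ℝ (⊤ : ℕ∞) (frank Em j k) U := by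
    intro j k
    unfold frank
    apply ContDiffOn.sum; intro p _
    apply ContDiffOn.sum; intro q _
    exact contDiffOn_const.mul (hpd_cd p q j)
  have hdfr : ∀ j k, ∀ x ∈ U, DifferentiableAt ℝ (frank Em j k) x :=
    fun j k x hx => diffAt_of_cd hU hx (hfr_cd j k)
  have hDfrank : ∀ x ∈ U, ∀ l j k, pd3 l (frank Em j k) x
      = ∑ p, ∑ q, lc k p q * pd3 l (pd3 p (Em q j)) x := by
    intro x hx l j k
    have d1 : ∀ p q, DifferentiableAt ℝ (fun y => lc k p q * pd3 p (Em q j) y) x :=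
      fun p q => (hdpd p q j x hx).const_mul _
    have d2 : ∀ p, DifferentiableAt ℝ (fun y => ∑ q, lc k p q * pd3 p (Em q j) y) x :=
      fun p => DifferentiableAt.fun_sum (fun q _ => d1 p q)
    unfold frank
    rw [pd3_sum Finset.univ _ (fun p _ => d2 p)]
    refine Finset.sum_congr rfl fun p _ => ?_
    rw [pd3_sum Finset.univ _ (fun q _ => d1 p q)]
    exact Finset.sum_congr rfl fun q _ => pd3_const_mul (hdpd p q j x hx) _
  have partA : ∀ x ∈ U, ∀ i k,
      (∑ l, ∑ j, lc i l j * pd3 l (frank Em j k) x) = eta Em i k x := by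
    intro x hx i k
    simp only [hDfrank x hx, eta]
    simp only [Fin.sum_univ_three, hsym 1 0, hsym 2 0, hsym 2 1]
    ring
  refine ⟨partA, ?_⟩
  intro x hx i k
  have hDburg : ∀ l j, pd3 l (burg x₀ Em j k) x
      = pd3 l (Em k j) x + ∑ p, ∑ q, lc k p q *
          ((if p = l then (1:ℝ) else 0) * frank Em j q x
            + (x p - x₀ p) * pd3 l (frank Em j q) x) := by
    intro l j
    have d1 : ∀ p q, DifferentiableAt ℝ
        (fun y => lc k p q * (y p - x₀ p) * frank Em j q y) x :=
      fun p q => ((diffAt_coord p (x₀ p)).const_mul (lc k p q)).fun_mul (hdfr j q x hx)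
    have d2 : ∀ p, DifferentiableAt ℝ
        (fun y => ∑ q, lc k p q * (y p - x₀ p) * frank Em j q y) x :=
      fun p => DifferentiableAt.fun_sum (fun q _ => d1 p q)
    have d3 : DifferentiableAt ℝ
        (fun y => ∑ p, ∑ q, lc k p q * (y p - x₀ p) * frank Em j q y) x :=
      DifferentiableAt.fun_sum (fun p _ => d2 p)
    unfold burg
    rw [pd3_add (hdE k j x hx) d3]
    congr 1
    rw [pd3_sum Finset.univ _ (fun p _ => d2 p)]
    refine Finset.sum_congr rfl fun p _ => ?_
    rw [pd3_sum Finset.univ _ (fun q _ => d1 p q)]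
    refine Finset.sum_congr rfl fun q _ => ?_
    have he : (fun y => lc k p q * (y p - x₀ p) * frank Em j q y)
        = fun y => lc k p q * ((fun y : EuclideanSpace ℝ (Fin 3) => y p - x₀ p) y
            * frank Em j q y) := by
      funext y; ring
    rw [he, pd3_const_mul ((diffAt_coord p (x₀ p)).fun_mul (hdfr j q x hx)) _,
      pd3_mul (diffAt_coord p (x₀ p)) (hdfr j q x hx), pd3_coord]
  simp only [hDburg, hDfrank x hx, eta, frank]
  fin_cases i <;> fin_cases k <;>
    · simp only [show ((⟨0, by omega⟩ : Fin 3)) = 0 from rfl,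
        show ((⟨1, by omega⟩ : Fin 3)) = 1 from rfl,
        show ((⟨2, by omega⟩ : Fin 3)) = 2 from rfl]
      simp only [Fin.sum_univ_three, Fin.reduceEq, reduceIte, hsym 1 0, hsym 2 0, hsym 2 1]
      norm_num [lc, Fin.reduceEq]
      ring
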